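/- arXiv:1405.5441 — 7 statements merged into one kernel-verified Lean document; each statement's English description precedes it below -/
import Mathlib

section
/- For every real number τ ≥ π there exists v ∈ (−π/2, π/2) such that F(τ, v, u₁) = F(τ, v, u₂) for all real u₁, u₂ (i.e. the value of F(τ, v, u) does not depend on u, so the parametrized geodesic sphere of radius τ self-intersects). Consequently, a geodesic sphere of radius ρ in S²×R is a simply parametrized surface only if ρ < π. -/
open Real Set

/-- The parametrization of the geodesic sphere of radius `τ` centred at `(1,0,0)` in the
projective model of `S²×R` geometry: `F τ v u` is the point at geodesic distance `τ`
along the geodesic with altitude `v` and longitude `u`. -/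
noncomputable def F (τ v u : ℝ) : ℝ × ℝ × ℝ :=
  (Real.exp (τ * Real.sin v) * Real.cos (τ * Real.cos v),
   Real.exp (τ * Real.sin v) * Real.sin (τ * Real.cos v) * Real.cos u,
   Real.exp (τ * Real.sin v) * Real.sin (τ * Real.cos v) * Real.sin u)

/-- For every radius `τ ≥ π` there is an altitude `v ∈ (−π/2, π/2)` at which the value of
`F τ v u` does not depend on the longitude `u`; i.e. the parametrized geodesic sphere of
radius `τ` self-intersects. Hence a geodesic sphere of radius `ρ` in `S²×R` is a simply
parametrized surface only if `ρ < π`. -/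
theorem geodesic_sphere_selfintersects_of_pi_le_radius :
    ∀ τ : ℝ, π ≤ τ → ∃ v ∈ Ioo (-(π/2)) (π/2), ∀ u₁ u₂ : ℝ, F τ v u₁ = F τ v u₂ := by
  intro τ hτ
  have hτ0 : 0 < τ := lt_of_lt_of_le Real.pi_pos hτ
  have h1 : π / τ ≤ 1 := (div_le_one hτ0).2 hτ
  have h0 : 0 < π / τ := div_pos Real.pi_pos hτ0
  refine ⟨Real.arccos (π / τ), ⟨?_, ?_⟩, ?_⟩
  · have := Real.arccos_nonneg (π / τ)
    linarith [Real.pi_pos]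
  · have := Real.arccos_lt_pi_div_two.2 h0
    exact this
  · intro u₁ u₂
    have hcos : Real.cos (Real.arccos (π / τ)) = π / τ :=
      Real.cos_arccos (by linarith) h1
    have key : τ * Real.cos (Real.arccos (π / τ)) = π := by
      rw [hcos]; field_simp
    simp [F, key, Real.sin_pi]
end

section
/- For every fixed ρ with 0 < ρ < π, the map (v, u) ↦ F(ρ, v, u) is injective on (−π/2, π/2) × (−π, π]. (This is the non-self-intersection half of the statement that a geodesic sphere of radius ρ exists in S²×R if and only if ρ ∈ [0, π).) -/
open Real Set

/-- For every fixed `ρ` with `0 < ρ < π`, the map `(v, u) ↦ F ρ v u` is injective on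
`(−π/2, π/2) × (−π, π]`: the geodesic sphere of radius `ρ < π` does not self-intersect. -/
theorem geodesic_sphere_injective_of_radius_lt_pi :
    ∀ ρ : ℝ, 0 < ρ → ρ < π →
      Set.InjOn (fun p : ℝ × ℝ => F ρ p.1 p.2) (Ioo (-(π/2)) (π/2) ×ˢ Ioc (-π) π) := by
  intro ρ hρ hρπ p hp q hq hF
  obtain ⟨v, u⟩ := p
  obtain ⟨v', u'⟩ := q
  obtain ⟨hv, hu⟩ := hp
  obtain ⟨hv', hu'⟩ := hq
  simp only [F, Prod.mk.injEq] at hF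
  obtain ⟨h1, h2, h3⟩ := hF
  simp only [mem_Ioo, mem_Ioc] at hv hv' hu hu'
  set a := Real.exp (ρ * Real.sin v) with ha
  set a' := Real.exp (ρ * Real.sin v') with ha'
  have hapos : 0 < a := Real.exp_pos _
  have hapos' : 0 < a' := Real.exp_pos _
  have hcv : 0 < Real.cos v := Real.cos_pos_of_mem_Ioo ⟨hv.1, hv.2⟩
  have hcv' : 0 < Real.cos v' := Real.cos_pos_of_mem_Ioo ⟨hv'.1, hv'.2⟩
  have hsin : ∀ w : ℝ, 0 < Real.cos w → 0 < Real.sin (ρ * Real.cos w) := by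
    intro w hw
    apply Real.sin_pos_of_pos_of_lt_pi (by positivity)
    calc ρ * Real.cos w ≤ ρ * 1 := by
          exact mul_le_mul_of_nonneg_left (Real.cos_le_one w) hρ.le
      _ = ρ := mul_one ρ
      _ < π := hρπ
  have hs : 0 < Real.sin (ρ * Real.cos v) := hsin v hcv
  have hs' : 0 < Real.sin (ρ * Real.cos v') := hsin v' hcv'
  -- radii equal
  have h2sq : (a * Real.sin (ρ * Real.cos v) * Real.cos u) ^ 2
      = (a' * Real.sin (ρ * Real.cos v') * Real.cos u') ^ 2 := by rw [h2]
  have h3sq : (a * Real.sin (ρ * Real.cos v) * Real.sin u) ^ 2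
      = (a' * Real.sin (ρ * Real.cos v') * Real.sin u') ^ 2 := by rw [h3]
  have hsq : (a * Real.sin (ρ * Real.cos v)) ^ 2 = (a' * Real.sin (ρ * Real.cos v')) ^ 2 := by
    linear_combination h2sq + h3sq - (a * Real.sin (ρ * Real.cos v)) ^ 2 * Real.sin_sq_add_cos_sq u
      + (a' * Real.sin (ρ * Real.cos v')) ^ 2 * Real.sin_sq_add_cos_sq u'
  have hrs : a * Real.sin (ρ * Real.cos v) = a' * Real.sin (ρ * Real.cos v') :=
    (sq_eq_sq₀ (mul_pos hapos hs).le (mul_pos hapos' hs').le).mp hsq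
  have h1sq : (a * Real.cos (ρ * Real.cos v)) ^ 2 = (a' * Real.cos (ρ * Real.cos v')) ^ 2 := by
    rw [h1]
  have haa : a = a' := by
    have hsq2 : a ^ 2 = a' ^ 2 := by
      linear_combination h1sq + hsq - a ^ 2 * Real.sin_sq_add_cos_sq (ρ * Real.cos v)
        + a' ^ 2 * Real.sin_sq_add_cos_sq (ρ * Real.cos v')
    nlinarith
  have hvv : v = v' := by
    have hsv : Real.sin v = Real.sin v' := by
      have := Real.exp_injective (ha ▸ ha' ▸ haa)
      exact mul_left_cancel₀ hρ.ne' this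
    exact Real.injOn_sin ⟨le_of_lt hv.1, le_of_lt hv.2⟩ ⟨le_of_lt hv'.1, le_of_lt hv'.2⟩ hsv
  subst hvv
  have hrpos : 0 < a * Real.sin (ρ * Real.cos v) := mul_pos hapos hs
  have hcu : Real.cos u = Real.cos u' := mul_left_cancel₀ hrpos.ne' h2
  have hsu : Real.sin u = Real.sin u' := mul_left_cancel₀ hrpos.ne' h3
  have hone : Real.cos (u - u') = 1 := by
    rw [Real.cos_sub, hcu, hsu]
    linear_combination Real.sin_sq_add_cos_sq u'
  have h2pi : u - u' = 0 := by
    have hb1 : -(2 * π) < u - u' := by linarith [hu.1, hu'.2]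
    have hb2 : u - u' < 2 * π := by linarith [hu.2, hu'.1]
    exact (Real.cos_eq_one_iff_of_lt_of_lt hb1 hb2).mp hone
  have huu : u = u' := by linarith
  simp [huu]
end

section
/- Let D be a Borel subset of the unit sphere S² ⊂ ℝ³ with spherical surface measure σ(D), and let 0 < α ≤ β be real numbers. Then the integral of (x² + y² + z²)^{−3/2} over the cone region C = { r·P : P ∈ D, r ∈ [α, β] } with respect to Lebesgue measure on ℝ³ equals σ(D) · log(β/α). (In the projective model of S²×R, C is a prism over base D with height h = log(β/α), so the volume of a prism equals the area of its base times its height.) -/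
open Real Set MeasureTheory Metric
open scoped NNReal

/-- Volume of a prism in the projective model of `S²×R`: for a Borel set `D` of the unit
sphere `S² ⊂ ℝ³` with spherical surface measure `σ D`, and `0 < α ≤ β`, the integral of
`(x² + y² + z²)^{-3/2}` over the cone region `{ r·P : P ∈ D, r ∈ [α, β] }` equals
`σ(D) · log(β/α)`, i.e. the area of the base times the height `h = log(β/α)`. -/
theorem prism_volume_eq_base_area_mul_height
    (D : Set (sphere (0 : EuclideanSpace ℝ (Fin 3)) 1)) (hD : MeasurableSet D)
    (α β : ℝ) (hα : 0 < α) (hαβ : α ≤ β) :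
    (∫ x in {x : EuclideanSpace ℝ (Fin 3) |
        ∃ P ∈ D, ∃ r ∈ Icc α β, x = r • (P : EuclideanSpace ℝ (Fin 3))},
      (‖x‖ ^ 2) ^ (-(3 : ℝ) / 2)) =
    ((volume : Measure (EuclideanSpace ℝ (Fin 3))).toSphere D).toReal * Real.log (β / α) := by
  set E := EuclideanSpace ℝ (Fin 3)
  set μ : Measure E := volume with hμ
  set h := homeomorphUnitSphereProd E with hh
  set C : Set E := {x : E | ∃ P ∈ D, ∃ r ∈ Icc α β, x = r • (P : E)} with hC
  set I : Set (Ioi (0 : ℝ)) := Subtype.val ⁻¹' Icc α β with hIdef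
  have hI : MeasurableSet I := measurableSet_Icc.preimage measurable_subtype_coe
  have hsub : Icc α β ⊆ Ioi (0 : ℝ) := fun r hr => lt_of_lt_of_le hα hr.1
  set φ : sphere (0 : E) 1 × Ioi (0 : ℝ) → E := Subtype.val ∘ h.symm with hφ
  have hφemb : MeasurableEmbedding φ :=
    (MeasurableEmbedding.subtype_coe (measurableSet_singleton (0:E)).compl).comp
      h.symm.measurableEmbedding
  have hCeq : C = φ '' (D ×ˢ I) := by
    ext x
    constructor
    · rintro ⟨P, hP, r, hr, rfl⟩
      exact ⟨(P, ⟨r, hsub hr⟩), ⟨hP, hr⟩, by simp [φ, hh]⟩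
    · rintro ⟨⟨P, r⟩, ⟨hP, hr⟩, rfl⟩
      exact ⟨P, hP, r, hr, by simp [φ, hh]⟩
  have hCmeas : MeasurableSet C := hCeq ▸ hφemb.measurableSet_image' (hD.prod hI)
  have hmem : ∀ x : ({(0:E)}ᶜ : Set E), (h x ∈ D ×ˢ I ↔ x.1 ∈ C) := by
    intro x
    rw [hCeq]
    constructor
    · intro hx
      exact ⟨h x, hx, by simp [φ]⟩
    · rintro ⟨p, hp, hpx⟩
      have : h.symm p = x := Subtype.val_injective hpx
      rwa [← this, h.apply_symm_apply]
  have key : (∫ x in C, (‖x‖ ^ 2) ^ (-(3 : ℝ) / 2) ∂μ) =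
      ∫ p, (D ×ˢ I).indicator
        (fun p : sphere (0 : E) 1 × Ioi (0 : ℝ) => (((p.2 : ℝ)) ^ 2) ^ (-(3 : ℝ) / 2)) p
        ∂(μ.toSphere.prod (Measure.volumeIoiPow (Module.finrank ℝ E - 1))) := by
    have hsc := integral_subtype_comap ((measurableSet_singleton (0:E)).compl) (μ := μ)
      (C.indicator fun x => (‖x‖ ^ 2) ^ (-(3 : ℝ) / 2))
    rw [MeasureTheory.restrict_compl_singleton] at hsc
    rw [← integral_indicator hCmeas, ← hsc,
      ← μ.measurePreserving_homeomorphUnitSphereProd.integral_comp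
        (Homeomorph.measurableEmbedding _)]
    refine integral_congr_ae (Filter.Eventually.of_forall fun x => ?_)
    by_cases hx : (x : E) ∈ C
    · simp only [indicator_of_mem hx, indicator_of_mem ((hmem x).2 hx)]
      rw [← hh, indicator_of_mem ((hmem x).2 hx)]; simp [hh]
    · simp only [indicator_of_notMem hx, indicator_of_notMem (fun hc => hx ((hmem x).1 hc))]
      rw [← hh, indicator_of_notMem (fun hc => hx ((hmem x).1 hc))]
  rw [key, integral_indicator (hD.prod hI), ← Measure.prod_restrict,
    integral_fun_snd (fun r : Ioi (0:ℝ) => ((r : ℝ) ^ 2) ^ (-(3 : ℝ) / 2)),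
    measureReal_restrict_apply_univ]
  have hdim : Module.finrank ℝ E = 3 := by simp [E]
  have hIim : Subtype.val '' I = Icc α β := by
    rw [hIdef, Subtype.image_preimage_coe]
    exact inter_eq_self_of_subset_right hsub
  have hInt : (∫ r : Ioi (0:ℝ) in I, ((r : ℝ) ^ 2) ^ (-(3 : ℝ) / 2)
      ∂(Measure.volumeIoiPow (Module.finrank ℝ E - 1))) = Real.log (β / α) := by
    simp only [Measure.volumeIoiPow, ENNReal.ofReal]
    rw [restrict_withDensity hI, integral_withDensity_eq_integral_smul
      ((measurable_subtype_coe.pow_const _).real_toNNReal)]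
    rw [(MeasurableEmbedding.subtype_coe measurableSet_Ioi).restrict_comap _ I, hIim]
    rw [integral_subtype_comap measurableSet_Ioi
      (fun r : ℝ => (r ^ (Module.finrank ℝ E - 1)).toNNReal • ((r ^ 2 : ℝ) ^ (-(3:ℝ)/2))),
      Measure.restrict_restrict measurableSet_Ioi, inter_eq_self_of_subset_right hsub]
    rw [setIntegral_congr_fun measurableSet_Icc
      (g := fun r : ℝ => r⁻¹) (fun r hr => ?_)]
    · rw [integral_Icc_eq_integral_Ioc, ← intervalIntegral.integral_of_le hαβ,
        integral_inv (by rw [uIcc_of_le hαβ]; exact fun h0 => hα.not_ge h0.1)]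
    · have hr0 : (0:ℝ) < r := hα.trans_le hr.1
      have h1 : ((r ^ 2 : ℝ)) ^ (-(3:ℝ)/2) = r ^ (-(3:ℝ)) := by
        rw [← Real.rpow_natCast r 2, ← Real.rpow_mul hr0.le]; norm_num
      have h2 : (((r ^ (Module.finrank ℝ E - 1)).toNNReal : ℝ≥0) : ℝ) = r ^ (2:ℝ) := by
        rw [hdim, Real.coe_toNNReal _ (by positivity), ← Real.rpow_natCast r 2]
        norm_num
      simp only [NNReal.smul_def, smul_eq_mul, h1, h2, ← Real.rpow_add hr0]
      norm_num [Real.rpow_neg_one]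
  rw [hInt, smul_eq_mul]
  rfl
end

section
/- The optimal packing density for the S²×R space group 1q.I.1 with q = 3 satisfies 0.509 < V(π/3) · 9 / (8π²) < 0.510 (the paper's value is δ^{opt}(1q.I.1) ≈ 0.50946, attained at q = 3). -/
open Real MeasureTheory intervalIntegral

/-- `V ρ` is the volume of the geodesic ball of radius `ρ` in `S²×R` geometry
(valid for `ρ ∈ [0, π)`). -/
noncomputable def V (ρ : ℝ) : ℝ :=
  2 * π * ∫ τ in (0 : ℝ)..ρ, ∫ v in (-(π/2))..(π/2), τ * Real.sin (τ * Real.cos v)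

/- ### Auxiliary: nonnegativity from derivative -/

lemma aux_nonneg_of_deriv (f f' : ℝ → ℝ) (hder : ∀ x, HasDerivAt f (f' x) x)
    (h0 : f 0 = 0) (hpos : ∀ x, 0 ≤ x → 0 ≤ f' x) {x : ℝ} (hx : 0 ≤ x) : 0 ≤ f x := by
  have hmono : MonotoneOn f (Set.Ici 0) := by
    apply monotoneOn_of_deriv_nonneg (convex_Ici 0)
    · exact fun y _ => (hder y).continuousAt.continuousWithinAt
    · exact fun y _ => (hder y).differentiableAt.differentiableWithinAt
    · intro y hy
      rw [(hder y).deriv]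
      exact hpos y (le_of_lt (by simpa using hy))
  have := hmono (Set.self_mem_Ici) (Set.mem_Ici.mpr hx) hx
  linarith [this, h0]

/- ### Taylor bounds for sin on [0, ∞) -/

lemma aux_sin_ge_cubic {x : ℝ} (hx : 0 ≤ x) : x - x^3/6 ≤ Real.sin x := by
  have h := aux_nonneg_of_deriv (fun x => Real.sin x - x + x^3/6)
      (fun x => Real.cos x - 1 + x^2/2) ?_ (by norm_num) ?_ hx
  · linarith [h]
  · intro y
    have h1 := (Real.hasDerivAt_sin y).sub (hasDerivAt_id y)
    have h2 := (hasDerivAt_pow 3 y).div_const 6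
    refine (h1.add h2).congr_deriv ?_
    beta_reduce
    ring
  · intro y _
    have := Real.one_sub_sq_div_two_le_cos (x := y)
    linarith

lemma aux_cos_le_quartic {x : ℝ} (hx : 0 ≤ x) :
    Real.cos x ≤ 1 - x^2/2 + x^4/24 := by
  have h := aux_nonneg_of_deriv (fun x => 1 - x^2/2 + x^4/24 - Real.cos x)
      (fun x => -x + x^3/6 + Real.sin x) ?_ (by norm_num) ?_ hx
  · linarith [h]
  · intro y
    have h1 := ((hasDerivAt_pow 2 y).div_const 2)
    have h2 := ((hasDerivAt_pow 4 y).div_const 24)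
    have h3 := ((hasDerivAt_const y (1:ℝ)).sub h1).add h2
    refine (h3.sub (Real.hasDerivAt_cos y)).congr_deriv ?_
    beta_reduce
    ring
  · intro y hy
    have := aux_sin_ge_cubic hy
    linarith

lemma aux_sin_le_quintic {x : ℝ} (hx : 0 ≤ x) :
    Real.sin x ≤ x - x^3/6 + x^5/120 := by
  have h := aux_nonneg_of_deriv (fun x => x - x^3/6 + x^5/120 - Real.sin x)
      (fun x => 1 - x^2/2 + x^4/24 - Real.cos x) ?_ (by norm_num) ?_ hx
  · linarith [h]
  · intro y
    have h1 := (hasDerivAt_id y).sub ((hasDerivAt_pow 3 y).div_const 6)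
    have h2 := h1.add ((hasDerivAt_pow 5 y).div_const 120)
    refine (h2.sub (Real.hasDerivAt_sin y)).congr_deriv ?_
    beta_reduce
    ring
  · intro y hy
    have := aux_cos_le_quartic hy
    linarith

lemma aux_cos_ge_sextic {x : ℝ} (hx : 0 ≤ x) :
    1 - x^2/2 + x^4/24 - x^6/720 ≤ Real.cos x := by
  have h := aux_nonneg_of_deriv (fun x => Real.cos x - (1 - x^2/2 + x^4/24 - x^6/720))
      (fun x => -Real.sin x + (x - x^3/6 + x^5/120)) ?_ (by norm_num) ?_ hx
  · linarith [h]
  · intro y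
    have h1 := ((hasDerivAt_const y (1:ℝ)).sub ((hasDerivAt_pow 2 y).div_const 2)).add
      ((hasDerivAt_pow 4 y).div_const 24)
    have h2 := h1.sub ((hasDerivAt_pow 6 y).div_const 720)
    refine ((Real.hasDerivAt_cos y).sub h2).congr_deriv ?_
    beta_reduce
    ring
  · intro y hy
    have := aux_sin_le_quintic hy
    linarith

lemma aux_sin_ge_septic {x : ℝ} (hx : 0 ≤ x) :
    x - x^3/6 + x^5/120 - x^7/5040 ≤ Real.sin x := by
  have h := aux_nonneg_of_deriv
      (fun x => Real.sin x - (x - x^3/6 + x^5/120 - x^7/5040))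
      (fun x => Real.cos x - (1 - x^2/2 + x^4/24 - x^6/720)) ?_ (by norm_num) ?_ hx
  · linarith [h]
  · intro y
    have h1 := ((hasDerivAt_id y).sub ((hasDerivAt_pow 3 y).div_const 6)).add
      ((hasDerivAt_pow 5 y).div_const 120)
    have h2 := h1.sub ((hasDerivAt_pow 7 y).div_const 5040)
    refine ((Real.hasDerivAt_sin y).sub h2).congr_deriv ?_
    beta_reduce
    ring
  · intro y hy
    have := aux_cos_ge_sextic hy
    linarith

/- ### Integrals of odd powers of cos over [-π/2, π/2] -/

lemma aux_int_cos1 : ∫ v in (-(π/2))..(π/2), Real.cos v = 2 := by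
  norm_num [integral_cos]

lemma aux_int_cos3 : ∫ v in (-(π/2))..(π/2), Real.cos v ^ 3 = 4/3 := by
  rw [integral_cos_pow_three]
  norm_num

lemma aux_int_poly_sym (n : ℕ) :
    ∫ v in (-(π/2))..(π/2), Real.cos v ^ (2*n+1) = ∫ u in (-1:ℝ)..1, (1 - u^2)^n := by
  have h := integral_sin_pow_mul_cos_pow_odd (a := -(π/2)) (b := π/2) 0 n
  simpa using h

lemma aux_int_cos5 : ∫ v in (-(π/2))..(π/2), Real.cos v ^ 5 = 16/15 := by
  have h := aux_int_poly_sym 2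
  norm_num at h
  rw [h]
  have he : ∀ u : ℝ, (1 - u^2)^2 = 1 - 2*u^2 + u^4 := fun u => by ring
  rw [intervalIntegral.integral_congr (g := fun u => 1 - 2*u^2 + u^4) (fun u _ => he u)]
  rw [intervalIntegral.integral_add (Continuous.intervalIntegrable (by fun_prop) _ _) (Continuous.intervalIntegrable (by fun_prop) _ _),
    intervalIntegral.integral_sub (Continuous.intervalIntegrable (by fun_prop) _ _) (Continuous.intervalIntegrable (by fun_prop) _ _),
    intervalIntegral.integral_const_mul]
  simp [integral_pow]
  norm_num

lemma aux_int_cos7 : ∫ v in (-(π/2))..(π/2), Real.cos v ^ 7 = 32/35 := by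
  have h := aux_int_poly_sym 3
  norm_num at h
  rw [h]
  have he : ∀ u : ℝ, (1 - u^2)^3 = 1 - 3*u^2 + 3*u^4 - u^6 := fun u => by ring
  rw [intervalIntegral.integral_congr (g := fun u => 1 - 3*u^2 + 3*u^4 - u^6) (fun u _ => he u)]
  rw [intervalIntegral.integral_sub (Continuous.intervalIntegrable (by fun_prop) _ _) (Continuous.intervalIntegrable (by fun_prop) _ _),
    intervalIntegral.integral_add (Continuous.intervalIntegrable (by fun_prop) _ _) (Continuous.intervalIntegrable (by fun_prop) _ _),
    intervalIntegral.integral_sub (Continuous.intervalIntegrable (by fun_prop) _ _) (Continuous.intervalIntegrable (by fun_prop) _ _),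
    intervalIntegral.integral_const_mul, intervalIntegral.integral_const_mul]
  simp [integral_pow]
  norm_num

/-- Integral of an odd cosine polynomial over [-π/2, π/2]. -/
lemma aux_int_cos_poly (c1 c3 c5 c7 : ℝ) :
    ∫ v in (-(π/2))..(π/2),
        (c1 * Real.cos v + c3 * Real.cos v ^ 3 + c5 * Real.cos v ^ 5 + c7 * Real.cos v ^ 7)
      = c1 * 2 + c3 * (4/3) + c5 * (16/15) + c7 * (32/35) := by
  rw [intervalIntegral.integral_add (Continuous.intervalIntegrable (by fun_prop) _ _) (Continuous.intervalIntegrable (by fun_prop) _ _),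
    intervalIntegral.integral_add (Continuous.intervalIntegrable (by fun_prop) _ _) (Continuous.intervalIntegrable (by fun_prop) _ _),
    intervalIntegral.integral_add (Continuous.intervalIntegrable (by fun_prop) _ _) (Continuous.intervalIntegrable (by fun_prop) _ _),
    intervalIntegral.integral_const_mul, intervalIntegral.integral_const_mul,
    intervalIntegral.integral_const_mul, intervalIntegral.integral_const_mul,
    aux_int_cos1, aux_int_cos3, aux_int_cos5, aux_int_cos7]

/- ### Inner integral bounds -/

lemma aux_inner_le {τ : ℝ} (hτ : 0 ≤ τ) :
    (∫ v in (-(π/2))..(π/2), τ * Real.sin (τ * Real.cos v))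
      ≤ 2 * τ^2 - (2/9) * τ^4 + (2/225) * τ^6 := by
  have hle : ∀ v ∈ Set.Icc (-(π/2)) (π/2),
      τ * Real.sin (τ * Real.cos v)
        ≤ τ^2 * Real.cos v + (-(τ^4/6)) * Real.cos v ^ 3 + (τ^6/120) * Real.cos v ^ 5
          + 0 * Real.cos v ^ 7 := by
    intro v hv
    have hc : 0 ≤ Real.cos v := Real.cos_nonneg_of_mem_Icc (by
      simpa using hv)
    have hx : 0 ≤ τ * Real.cos v := mul_nonneg hτ hc
    have h := aux_sin_le_quintic hx
    have h2 := mul_le_mul_of_nonneg_left h hτ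
    calc τ * Real.sin (τ * Real.cos v) ≤ τ * ((τ * Real.cos v) - (τ * Real.cos v)^3/6
        + (τ * Real.cos v)^5/120) := h2
      _ = τ^2 * Real.cos v + (-(τ^4/6)) * Real.cos v ^ 3 + (τ^6/120) * Real.cos v ^ 5
          + 0 * Real.cos v ^ 7 := by ring
  have hmono := intervalIntegral.integral_mono_on (μ := volume) (by linarith [pi_pos] : -(π/2) ≤ π/2)
    (Continuous.intervalIntegrable (by fun_prop) _ _)
    (Continuous.intervalIntegrable (by fun_prop) _ _) hle
  rw [aux_int_cos_poly] at hmono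
  calc (∫ v in (-(π/2))..(π/2), τ * Real.sin (τ * Real.cos v))
      ≤ τ^2 * 2 + (-(τ^4/6)) * (4/3) + (τ^6/120) * (16/15) + 0 * (32/35) := hmono
    _ = 2 * τ^2 - (2/9) * τ^4 + (2/225) * τ^6 := by ring

lemma aux_inner_ge {τ : ℝ} (hτ : 0 ≤ τ) :
    2 * τ^2 - (2/9) * τ^4 + (2/225) * τ^6 - (2/11025) * τ^8
      ≤ ∫ v in (-(π/2))..(π/2), τ * Real.sin (τ * Real.cos v) := by
  have hle : ∀ v ∈ Set.Icc (-(π/2)) (π/2),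
      τ^2 * Real.cos v + (-(τ^4/6)) * Real.cos v ^ 3 + (τ^6/120) * Real.cos v ^ 5
          + (-(τ^8/5040)) * Real.cos v ^ 7
        ≤ τ * Real.sin (τ * Real.cos v) := by
    intro v hv
    have hc : 0 ≤ Real.cos v := Real.cos_nonneg_of_mem_Icc (by simpa using hv)
    have hx : 0 ≤ τ * Real.cos v := mul_nonneg hτ hc
    have h := aux_sin_ge_septic hx
    have h2 := mul_le_mul_of_nonneg_left h hτ
    calc τ^2 * Real.cos v + (-(τ^4/6)) * Real.cos v ^ 3 + (τ^6/120) * Real.cos v ^ 5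
          + (-(τ^8/5040)) * Real.cos v ^ 7
        = τ * ((τ * Real.cos v) - (τ * Real.cos v)^3/6 + (τ * Real.cos v)^5/120
          - (τ * Real.cos v)^7/5040) := by ring
      _ ≤ τ * Real.sin (τ * Real.cos v) := h2
  have hmono := intervalIntegral.integral_mono_on (μ := volume) (by linarith [pi_pos] : -(π/2) ≤ π/2)
    (Continuous.intervalIntegrable (by fun_prop) _ _)
    (Continuous.intervalIntegrable (by fun_prop) _ _) hle
  rw [aux_int_cos_poly] at hmono
  calc 2 * τ^2 - (2/9) * τ^4 + (2/225) * τ^6 - (2/11025) * τ^8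
      = τ^2 * 2 + (-(τ^4/6)) * (4/3) + (τ^6/120) * (16/15) + (-(τ^8/5040)) * (32/35) := by ring
    _ ≤ _ := hmono

/- ### Outer integral bounds -/

lemma aux_inner_continuous :
    Continuous fun τ : ℝ => ∫ v in (-(π/2))..(π/2), τ * Real.sin (τ * Real.cos v) := by
  apply intervalIntegral.continuous_parametric_intervalIntegral_of_continuous'
  fun_prop

lemma aux_int_tau_poly (r c2 c4 c6 c8 : ℝ) :
    ∫ τ in (0:ℝ)..r, (c2 * τ^2 + c4 * τ^4 + c6 * τ^6 + c8 * τ^8)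
      = c2 * r^3/3 + c4 * r^5/5 + c6 * r^7/7 + c8 * r^9/9 := by
  rw [intervalIntegral.integral_add (Continuous.intervalIntegrable (by fun_prop) _ _) (Continuous.intervalIntegrable (by fun_prop) _ _),
    intervalIntegral.integral_add (Continuous.intervalIntegrable (by fun_prop) _ _) (Continuous.intervalIntegrable (by fun_prop) _ _),
    intervalIntegral.integral_add (Continuous.intervalIntegrable (by fun_prop) _ _) (Continuous.intervalIntegrable (by fun_prop) _ _),
    intervalIntegral.integral_const_mul, intervalIntegral.integral_const_mul,
    intervalIntegral.integral_const_mul, intervalIntegral.integral_const_mul]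
  simp [integral_pow]
  ring

lemma aux_outer_le (r : ℝ) (hr : 0 ≤ r) :
    (∫ τ in (0:ℝ)..r, ∫ v in (-(π/2))..(π/2), τ * Real.sin (τ * Real.cos v))
      ≤ 2 * r^3/3 - (2/9) * r^5/5 + (2/225) * r^7/7 := by
  have hmono := intervalIntegral.integral_mono_on (μ := volume) hr
    (Continuous.intervalIntegrable aux_inner_continuous _ _)
    (Continuous.intervalIntegrable (by fun_prop) _ _)
    (g := fun τ => 2 * τ^2 + (-(2/9)) * τ^4 + (2/225) * τ^6 + 0 * τ^8)
    (fun τ hτ => by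
      have := aux_inner_le hτ.1
      linarith [this])
  rw [aux_int_tau_poly] at hmono
  calc _ ≤ 2 * r^3/3 + (-(2/9)) * r^5/5 + (2/225) * r^7/7 + 0 * r^9/9 := hmono
    _ = 2 * r^3/3 - (2/9) * r^5/5 + (2/225) * r^7/7 := by ring

lemma aux_outer_ge (r : ℝ) (hr : 0 ≤ r) :
    2 * r^3/3 - (2/9) * r^5/5 + (2/225) * r^7/7 - (2/11025) * r^9/9
      ≤ ∫ τ in (0:ℝ)..r, ∫ v in (-(π/2))..(π/2), τ * Real.sin (τ * Real.cos v) := by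
  have hmono := intervalIntegral.integral_mono_on (μ := volume) hr
    (Continuous.intervalIntegrable (by fun_prop) _ _)
    (Continuous.intervalIntegrable aux_inner_continuous _ _)
    (f := fun τ => 2 * τ^2 + (-(2/9)) * τ^4 + (2/225) * τ^6 + (-(2/11025)) * τ^8)
    (fun τ hτ => by
      have := aux_inner_ge hτ.1
      linarith [this])
  rw [aux_int_tau_poly] at hmono
  calc 2 * r^3/3 - (2/9) * r^5/5 + (2/225) * r^7/7 - (2/11025) * r^9/9
      = 2 * r^3/3 + (-(2/9)) * r^5/5 + (2/225) * r^7/7 + (-(2/11025)) * r^9/9 := by ring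
    _ ≤ _ := hmono

/- ### Numeric bounds on powers of π -/

lemma aux_pi_pows :
    (31.00623 : ℝ) < π^3 ∧ π^3 < 31.00633 ∧
    (306.0190 : ℝ) < π^5 ∧ π^5 < 306.0203 ∧
    (3020.284 : ℝ) < π^7 ∧ π^7 < 3020.302 ∧ π^9 < 29809.20 := by
  have hl : (3.141592 : ℝ) < π := pi_gt_d6
  have hu : π < 3.141593 := pi_lt_d6
  have hπ : (0:ℝ) < π := pi_pos
  have h2l : (9.869600 : ℝ) < π^2 := by nlinarith
  have h2u : π^2 < 9.869607 := by nlinarith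
  have h3l : (31.00623 : ℝ) < π^3 := by nlinarith
  have h3u : π^3 < 31.00633 := by nlinarith
  have h5l : (306.0190 : ℝ) < π^5 := by nlinarith
  have h5u : π^5 < 306.0203 := by nlinarith
  have h7l : (3020.284 : ℝ) < π^7 := by nlinarith
  have h7u : π^7 < 3020.302 := by nlinarith
  have h9u : π^9 < 29809.20 := by nlinarith
  exact ⟨h3l, h3u, h5l, h5u, h7l, h7u, h9u⟩

/-- The optimal packing density for the `S²×R` space group `1q.I.1` (attained at `q = 3`)
satisfies `0.509 < V(π/3)·9/(8π²) < 0.510` (the paper's value is `≈ 0.50946`). -/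
theorem density_1qI1_bounds :
    0.509 < V (π / 3) * 9 / (8 * π ^ 2) ∧ V (π / 3) * 9 / (8 * π ^ 2) < 0.510 := by
  have hπ : (0:ℝ) < π := pi_pos
  set I := ∫ τ in (0:ℝ)..(π/3), ∫ v in (-(π/2))..(π/2), τ * Real.sin (τ * Real.cos v) with hI
  have hVeq : V (π/3) * 9 / (8 * π^2) = 9 * I / (4 * π) := by
    rw [V, ← hI]
    field_simp
    ring
  have hr : (0:ℝ) ≤ π/3 := by positivity
  have hup := aux_outer_le (π/3) hr
  have hlow := aux_outer_ge (π/3) hr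
  rw [← hI] at hup hlow
  obtain ⟨h3l, h3u, h5l, h5u, h7l, h7u, h9u⟩ := aux_pi_pows
  rw [hVeq]
  constructor
  · rw [lt_div_iff₀ (by positivity)]
    have key : (0.509 : ℝ) * (4 * π) < 9 * (2 * (π/3)^3/3 - (2/9) * (π/3)^5/5
        + (2/225) * (π/3)^7/7 - (2/11025) * (π/3)^9/9) := by
      have hπl : (3.141592 : ℝ) < π := pi_gt_d6
      have e : 9 * (2 * (π/3)^3/3 - (2/9) * (π/3)^5/5 + (2/225) * (π/3)^7/7
          - (2/11025) * (π/3)^9/9)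
          = 2*π^3/9 - 2*π^5/1215 + 2*π^7/382725 - 2*π^9/217005075 := by ring
      rw [e]
      nlinarith [h3l, h5u, h7l, h9u, pi_lt_d6]
    linarith [hlow, key]
  · rw [div_lt_iff₀ (by positivity)]
    have key : 9 * (2 * (π/3)^3/3 - (2/9) * (π/3)^5/5 + (2/225) * (π/3)^7/7)
        < (0.510 : ℝ) * (4 * π) := by
      have hπl : (3.141592 : ℝ) < π := pi_gt_d6
      have e : 9 * (2 * (π/3)^3/3 - (2/9) * (π/3)^5/5 + (2/225) * (π/3)^7/7)
          = 2*π^3/9 - 2*π^5/1215 + 2*π^7/382725 := by ring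
      rw [e]
      nlinarith [h3u, h5l, h7u]
    linarith [hup, key]
end

section
/- Let K = (√((5+√5)/10), c, c) ∈ ℝ³ with c = (1/2)·√((√5−1)/√5), and let R = arccos(√((5+√5)/10)). Then K is a unit vector, ⟨K, σ(K)⟩ = 1/√5 where σ(x,y,z) = (x, −y, −z) is the half-turn about the x-axis, and cos(2R) = 1/√5; hence the spherical distance from K to σ(K) equals 2R, i.e. the optimal ball of radius R centred at K touches its image under the 2-fold rotation g₁ of the space group 8.I.1. -/
open Real

/-- Euclidean dot product on `ℝ³ = ℝ × ℝ × ℝ`. -/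
def dot (p q : ℝ × ℝ × ℝ) : ℝ := p.1 * q.1 + p.2.1 * q.2.1 + p.2.2 * q.2.2

/-- The half-turn `g₁` about the `x`-axis. -/
def halfTurnX (p : ℝ × ℝ × ℝ) : ℝ × ℝ × ℝ := (p.1, -p.2.1, -p.2.2)

/-- The optimal kernel point `K = (√((5+√5)/10), c, c)` with `c = (1/2)√((√5−1)/√5)` and
optimal radius `R = arccos √((5+√5)/10)` for the `S²×R` space group `8.I.1` satisfy:
`K` is a unit vector, `⟨K, σ(K)⟩ = 1/√5` for the half-turn `σ` about the `x`-axis,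
`cos(2R) = 1/√5`, and hence the spherical distance `arccos⟨K, σ(K)⟩` equals `2R`:
the optimal ball touches its image under `g₁`. -/
theorem optimal_ball_touches_halfTurn_image_8I1 :
    let K : ℝ × ℝ × ℝ :=
      (Real.sqrt ((5 + Real.sqrt 5) / 10),
       (1/2) * Real.sqrt ((Real.sqrt 5 - 1) / Real.sqrt 5),
       (1/2) * Real.sqrt ((Real.sqrt 5 - 1) / Real.sqrt 5))
    let R : ℝ := Real.arccos (Real.sqrt ((5 + Real.sqrt 5) / 10))
    dot K K = 1 ∧
    dot K (halfTurnX K) = 1 / Real.sqrt 5 ∧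
    Real.cos (2 * R) = 1 / Real.sqrt 5 ∧
    Real.arccos (dot K (halfTurnX K)) = 2 * R := by
  intro K R
  have hs0 : (0:ℝ) < Real.sqrt 5 := Real.sqrt_pos.2 (by norm_num)
  have hs2 : Real.sqrt 5 * Real.sqrt 5 = 5 := Real.mul_self_sqrt (by norm_num)
  have hs1 : (1:ℝ) ≤ Real.sqrt 5 := by nlinarith
  have hs5 : Real.sqrt 5 ≤ 5 := by nlinarith
  have hx2 : Real.sqrt ((5 + Real.sqrt 5) / 10) * Real.sqrt ((5 + Real.sqrt 5) / 10)
      = (5 + Real.sqrt 5) / 10 := Real.mul_self_sqrt (by positivity)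
  have hc2 : Real.sqrt ((Real.sqrt 5 - 1) / Real.sqrt 5) *
      Real.sqrt ((Real.sqrt 5 - 1) / Real.sqrt 5) = (5 - Real.sqrt 5) / 5 := by
    rw [Real.mul_self_sqrt (div_nonneg (by linarith) hs0.le),
      div_eq_div_iff hs0.ne' (by norm_num : (5:ℝ) ≠ 0)]
    linear_combination hs2
  have hinv : (1:ℝ) / Real.sqrt 5 = Real.sqrt 5 / 5 := by
    rw [div_eq_div_iff hs0.ne' (by norm_num : (5:ℝ) ≠ 0)]
    linear_combination -hs2
  have hdotKK : dot K K = 1 := by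
    simp only [K, dot]
    linear_combination hx2 + (1/2) * hc2
  have hdotσ : dot K (halfTurnX K) = 1 / Real.sqrt 5 := by
    simp only [K, dot, halfTurnX]
    rw [hinv]
    linear_combination hx2 - (1/2) * hc2
  have hx0 : (0:ℝ) ≤ Real.sqrt ((5 + Real.sqrt 5) / 10) := Real.sqrt_nonneg _
  have hx1 : Real.sqrt ((5 + Real.sqrt 5) / 10) ≤ 1 := by
    rw [show (1:ℝ) = Real.sqrt 1 from (Real.sqrt_one).symm]
    apply Real.sqrt_le_sqrt; linarith
  have hcosR : Real.cos R = Real.sqrt ((5 + Real.sqrt 5) / 10) :=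
    Real.cos_arccos (by linarith) hx1
  have hcos2R : Real.cos (2 * R) = 1 / Real.sqrt 5 := by
    rw [Real.cos_two_mul, hcosR, hinv]
    linear_combination 2 * hx2
  refine ⟨hdotKK, hdotσ, hcos2R, ?_⟩
  have h0 : 0 ≤ R := Real.arccos_nonneg _
  have h1 : R ≤ π / 2 := by
    show Real.arccos _ ≤ π / 2
    rw [Real.arccos_le_pi_div_two]; exact hx0
  rw [hdotσ, ← hcos2R, Real.arccos_cos (by linarith) (by linarith)]
end

section
/- Set R = arccos(√((5+√5)/10)). The optimal packing density of the S²×R space group 8.I.1, namely V(R) / ((π/3) · 2R), satisfies 0.600 < V(R) / ((2π/3)·R) < 0.601 (the paper's value is δ^{opt}(8.I.1) ≈ 0.6005). -/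
open Real

namespace Density8I1

/-- Monotonicity helper: if `F' ≥ 0` on `[0,∞)` then `F 0 ≤ F x` for `x ≥ 0`. -/
lemma mono_aux {F F' : ℝ → ℝ} (hd : ∀ x, HasDerivAt F (F' x) x)
    (h' : ∀ x, 0 ≤ x → 0 ≤ F' x) {x : ℝ} (hx : 0 ≤ x) : F 0 ≤ F x := by
  have hm : MonotoneOn F (Set.Ici (0 : ℝ)) := by
    apply monotoneOn_of_deriv_nonneg (convex_Ici 0)
      (fun y _ => (hd y).continuousAt.continuousWithinAt)
      (fun y _ => (hd y).differentiableAt.differentiableWithinAt)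
    intro y hy
    rw [(hd y).deriv]
    exact h' y (le_of_lt (by simpa using hy))
  exact hm Set.self_mem_Ici hx hx

lemma sin_ge_cubic {x : ℝ} (hx : 0 ≤ x) : x - x ^ 3 / 6 ≤ Real.sin x := by
  have h := mono_aux (F := fun y => Real.sin y - y + y ^ 3 / 6)
      (F' := fun y => Real.cos y - 1 + y ^ 2 / 2) (fun y => ?_) (fun y hy => ?_) hx
  · simp only [Real.sin_zero] at h
    nlinarith [h]
  · have h1 := ((Real.hasDerivAt_sin y).sub (hasDerivAt_id' (x := y))).add
      ((hasDerivAt_pow 3 y).div_const 6)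
    refine h1.congr_deriv ?_
    push_cast
    ring
  · nlinarith [Real.one_sub_sq_div_two_le_cos (x := y)]

lemma cos_le_quartic {x : ℝ} (hx : 0 ≤ x) : Real.cos x ≤ 1 - x ^ 2 / 2 + x ^ 4 / 24 := by
  have h := mono_aux (F := fun y => 1 - y ^ 2 / 2 + y ^ 4 / 24 - Real.cos y)
      (F' := fun y => Real.sin y - y + y ^ 3 / 6) (fun y => ?_) (fun y hy => ?_) hx
  · simp only [Real.cos_zero] at h
    nlinarith [h]
  · have h1 := ((((hasDerivAt_const y (1 : ℝ)).sub ((hasDerivAt_pow 2 y).div_const 2)).add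
      ((hasDerivAt_pow 4 y).div_const 24)).sub (Real.hasDerivAt_cos y))
    refine h1.congr_deriv ?_
    push_cast
    ring
  · nlinarith [sin_ge_cubic hy]

lemma sin_le_quintic {x : ℝ} (hx : 0 ≤ x) :
    Real.sin x ≤ x - x ^ 3 / 6 + x ^ 5 / 120 := by
  have h := mono_aux (F := fun y => y - y ^ 3 / 6 + y ^ 5 / 120 - Real.sin y)
      (F' := fun y => 1 - y ^ 2 / 2 + y ^ 4 / 24 - Real.cos y) (fun y => ?_) (fun y hy => ?_) hx
  · simp only [Real.sin_zero] at h
    nlinarith [h]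
  · have h1 := (((hasDerivAt_id' (x := y)).sub ((hasDerivAt_pow 3 y).div_const 6)).add
      ((hasDerivAt_pow 5 y).div_const 120)).sub (Real.hasDerivAt_sin y)
    refine h1.congr_deriv ?_
    push_cast
    ring
  · nlinarith [cos_le_quartic hy]

lemma cos_ge_sextic {x : ℝ} (hx : 0 ≤ x) :
    1 - x ^ 2 / 2 + x ^ 4 / 24 - x ^ 6 / 720 ≤ Real.cos x := by
  have h := mono_aux
      (F := fun y => Real.cos y - 1 + y ^ 2 / 2 - y ^ 4 / 24 + y ^ 6 / 720)
      (F' := fun y => y - y ^ 3 / 6 + y ^ 5 / 120 - Real.sin y) (fun y => ?_) (fun y hy => ?_) hx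
  · simp only [Real.cos_zero] at h
    nlinarith [h]
  · have h1 := ((((Real.hasDerivAt_cos y).sub (hasDerivAt_const y (1 : ℝ))).add
      ((hasDerivAt_pow 2 y).div_const 2)).sub ((hasDerivAt_pow 4 y).div_const 24)).add
      ((hasDerivAt_pow 6 y).div_const 720)
    refine h1.congr_deriv ?_
    push_cast
    ring
  · nlinarith [sin_le_quintic hy]

/-! ### Integrals of powers of cosine over `[-π/2, π/2]` -/

lemma integral_cos1 : ∫ v in (-(π/2))..(π/2), Real.cos v = 2 := by
  rw [integral_cos]
  simp
  norm_num

lemma integral_cos3 : ∫ v in (-(π/2))..(π/2), Real.cos v ^ 3 = 4 / 3 := by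
  rw [integral_cos_pow_three]
  simp
  norm_num

lemma integral_cos5 : ∫ v in (-(π/2))..(π/2), Real.cos v ^ 5 = 16 / 15 := by
  have h := @integral_sin_pow_mul_cos_pow_odd (-(π/2)) (π/2) 0 2
  norm_num at h
  rw [h]
  have hexp : ∀ u : ℝ, (1 - u ^ 2) ^ 2 = 1 - 2 * u ^ 2 + u ^ 4 := fun u => by ring
  simp_rw [hexp]
  rw [intervalIntegral.integral_add (by apply Continuous.intervalIntegrable; fun_prop)
      (by apply Continuous.intervalIntegrable; fun_prop),
    intervalIntegral.integral_sub (by apply Continuous.intervalIntegrable; fun_prop)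
      (by apply Continuous.intervalIntegrable; fun_prop),
    intervalIntegral.integral_const_mul, integral_pow, integral_pow]
  norm_num

/-! ### Bounds for the inner integral -/

lemma inner_lb {τ : ℝ} (hτ : 0 ≤ τ) :
    2 * τ ^ 2 - 2 / 9 * τ ^ 4 ≤ ∫ v in (-(π/2))..(π/2), τ * Real.sin (τ * Real.cos v) := by
  have hval : ∫ v in (-(π/2))..(π/2), (τ ^ 2 * Real.cos v - τ ^ 4 / 6 * Real.cos v ^ 3)
      = 2 * τ ^ 2 - 2 / 9 * τ ^ 4 := by
    rw [intervalIntegral.integral_sub (by apply Continuous.intervalIntegrable; fun_prop)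
        (by apply Continuous.intervalIntegrable; fun_prop),
      intervalIntegral.integral_const_mul, intervalIntegral.integral_const_mul,
      integral_cos1, integral_cos3]
    ring
  rw [← hval]
  apply intervalIntegral.integral_mono_on (by linarith [pi_pos])
    (by apply Continuous.intervalIntegrable; fun_prop)
    (by apply Continuous.intervalIntegrable; fun_prop)
  intro v hv
  have hc : 0 ≤ Real.cos v := Real.cos_nonneg_of_mem_Icc hv
  have h := sin_ge_cubic (mul_nonneg hτ hc)
  calc τ ^ 2 * Real.cos v - τ ^ 4 / 6 * Real.cos v ^ 3
      = τ * (τ * Real.cos v - (τ * Real.cos v) ^ 3 / 6) := by ring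
    _ ≤ τ * Real.sin (τ * Real.cos v) := mul_le_mul_of_nonneg_left h hτ

lemma inner_ub {τ : ℝ} (hτ : 0 ≤ τ) :
    (∫ v in (-(π/2))..(π/2), τ * Real.sin (τ * Real.cos v))
      ≤ 2 * τ ^ 2 - 2 / 9 * τ ^ 4 + 2 / 225 * τ ^ 6 := by
  have hval : ∫ v in (-(π/2))..(π/2),
      (τ ^ 2 * Real.cos v - τ ^ 4 / 6 * Real.cos v ^ 3 + τ ^ 6 / 120 * Real.cos v ^ 5)
      = 2 * τ ^ 2 - 2 / 9 * τ ^ 4 + 2 / 225 * τ ^ 6 := by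
    rw [intervalIntegral.integral_add (by apply Continuous.intervalIntegrable; fun_prop)
        (by apply Continuous.intervalIntegrable; fun_prop),
      intervalIntegral.integral_sub (by apply Continuous.intervalIntegrable; fun_prop)
        (by apply Continuous.intervalIntegrable; fun_prop),
      intervalIntegral.integral_const_mul, intervalIntegral.integral_const_mul,
      intervalIntegral.integral_const_mul, integral_cos1, integral_cos3, integral_cos5]
    ring
  rw [← hval]
  apply intervalIntegral.integral_mono_on (by linarith [pi_pos])
    (by apply Continuous.intervalIntegrable; fun_prop)
    (by apply Continuous.intervalIntegrable; fun_prop)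
  intro v hv
  have hc : 0 ≤ Real.cos v := Real.cos_nonneg_of_mem_Icc hv
  have h := sin_le_quintic (mul_nonneg hτ hc)
  calc τ * Real.sin (τ * Real.cos v)
      ≤ τ * (τ * Real.cos v - (τ * Real.cos v) ^ 3 / 6 + (τ * Real.cos v) ^ 5 / 120) :=
        mul_le_mul_of_nonneg_left h hτ
    _ = τ ^ 2 * Real.cos v - τ ^ 4 / 6 * Real.cos v ^ 3 + τ ^ 6 / 120 * Real.cos v ^ 5 := by
        ring

/-! ### Bounds for the outer integral -/

lemma g_continuous :
    Continuous (fun τ : ℝ => ∫ v in (-(π/2))..(π/2), τ * Real.sin (τ * Real.cos v)) := by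
  apply intervalIntegral.continuous_parametric_intervalIntegral_of_continuous'
    (f := fun (τ : ℝ) (v : ℝ) => τ * Real.sin (τ * Real.cos v))
  apply Continuous.mul
  · exact continuous_fst.comp continuous_id
  · fun_prop

lemma outer_lb {R : ℝ} (hR : 0 ≤ R) :
    2 / 3 * R ^ 3 - 2 / 45 * R ^ 5
      ≤ ∫ τ in (0 : ℝ)..R, ∫ v in (-(π/2))..(π/2), τ * Real.sin (τ * Real.cos v) := by
  have hval : ∫ τ in (0 : ℝ)..R, (2 * τ ^ 2 - 2 / 9 * τ ^ 4)
      = 2 / 3 * R ^ 3 - 2 / 45 * R ^ 5 := by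
    rw [intervalIntegral.integral_sub (by apply Continuous.intervalIntegrable; fun_prop)
        (by apply Continuous.intervalIntegrable; fun_prop),
      intervalIntegral.integral_const_mul, intervalIntegral.integral_const_mul,
      integral_pow, integral_pow]
    norm_num
    ring
  rw [← hval]
  apply intervalIntegral.integral_mono_on hR
    (by apply Continuous.intervalIntegrable; fun_prop)
    (g_continuous.intervalIntegrable _ _)
  intro τ hτ
  exact inner_lb hτ.1

lemma outer_ub {R : ℝ} (hR : 0 ≤ R) :
    (∫ τ in (0 : ℝ)..R, ∫ v in (-(π/2))..(π/2), τ * Real.sin (τ * Real.cos v))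
      ≤ 2 / 3 * R ^ 3 - 2 / 45 * R ^ 5 + 2 / 1575 * R ^ 7 := by
  have hval : ∫ τ in (0 : ℝ)..R, (2 * τ ^ 2 - 2 / 9 * τ ^ 4 + 2 / 225 * τ ^ 6)
      = 2 / 3 * R ^ 3 - 2 / 45 * R ^ 5 + 2 / 1575 * R ^ 7 := by
    rw [intervalIntegral.integral_add (by apply Continuous.intervalIntegrable; fun_prop)
        (by apply Continuous.intervalIntegrable; fun_prop),
      intervalIntegral.integral_sub (by apply Continuous.intervalIntegrable; fun_prop)
        (by apply Continuous.intervalIntegrable; fun_prop),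
      intervalIntegral.integral_const_mul, intervalIntegral.integral_const_mul,
      intervalIntegral.integral_const_mul, integral_pow, integral_pow, integral_pow]
    norm_num
    ring
  rw [← hval]
  apply intervalIntegral.integral_mono_on hR
    (g_continuous.intervalIntegrable _ _)
    (by apply Continuous.intervalIntegrable; fun_prop)
  intro τ hτ
  exact inner_ub hτ.1

/-! ### Numeric bounds for `R` -/

lemma sqrt5_lb : (2.23606 : ℝ) < Real.sqrt 5 := by
  rw [show (5 : ℝ) = (5 : ℝ) from rfl, Real.lt_sqrt (by norm_num)]
  norm_num

lemma sqrt5_ub : Real.sqrt 5 < 2.2361 := by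
  rw [Real.sqrt_lt' (by norm_num)]
  norm_num

lemma R_mem : (0.5535 : ℝ) < Real.arccos (Real.sqrt ((5 + Real.sqrt 5) / 10)) ∧
    Real.arccos (Real.sqrt ((5 + Real.sqrt 5) / 10)) < 0.5537 := by
  set c : ℝ := Real.sqrt ((5 + Real.sqrt 5) / 10) with hc
  set R : ℝ := Real.arccos c with hRdef
  have h5l := sqrt5_lb
  have h5u := sqrt5_ub
  have hc0 : 0 ≤ c := Real.sqrt_nonneg _
  have hc1 : c ≤ 1 := by
    rw [hc, show (1 : ℝ) = Real.sqrt 1 by rw [Real.sqrt_one]]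
    apply Real.sqrt_le_sqrt
    nlinarith
  have hcos : Real.cos R = c := Real.cos_arccos (by linarith) hc1
  have hRicc : R ∈ Set.Icc 0 π := ⟨Real.arccos_nonneg _, Real.arccos_le_pi _⟩
  have hpi : (3.14 : ℝ) < π := by linarith [Real.pi_gt_d6]
  constructor
  · -- 0.5535 < R  since  cos R = c < cos 0.5535
    have haIcc : (0.5535 : ℝ) ∈ Set.Icc 0 π := ⟨by norm_num, by linarith⟩
    have hlt : Real.cos R < Real.cos 0.5535 := by
      rw [hcos]
      have hpoly : (1 : ℝ) - (0.5535 : ℝ) ^ 2 / 2 + (0.5535 : ℝ) ^ 4 / 24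
          - (0.5535 : ℝ) ^ 6 / 720 ≤ Real.cos 0.5535 := cos_ge_sextic (by norm_num)
      have hcp : c < (1 : ℝ) - (0.5535 : ℝ) ^ 2 / 2 + (0.5535 : ℝ) ^ 4 / 24
          - (0.5535 : ℝ) ^ 6 / 720 := by
        rw [hc, Real.sqrt_lt' (by norm_num)]
        nlinarith
      linarith
    exact (Real.strictAntiOn_cos.lt_iff_gt hRicc haIcc).mp hlt
  · -- R < 0.5537  since  cos 0.5537 < c = cos R
    have hbIcc : (0.5537 : ℝ) ∈ Set.Icc 0 π := ⟨by norm_num, by linarith⟩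
    have hlt : Real.cos 0.5537 < Real.cos R := by
      rw [hcos]
      have hpoly : Real.cos 0.5537 ≤ (1 : ℝ) - (0.5537 : ℝ) ^ 2 / 2 + (0.5537 : ℝ) ^ 4 / 24 :=
        cos_le_quartic (by norm_num)
      have hcp : (1 : ℝ) - (0.5537 : ℝ) ^ 2 / 2 + (0.5537 : ℝ) ^ 4 / 24 < c := by
        rw [hc, Real.lt_sqrt (by norm_num)]
        nlinarith
      linarith
    exact (Real.strictAntiOn_cos.lt_iff_gt hbIcc hRicc).mp hlt

end Density8I1

/-- With `R = arccos √((5+√5)/10)`, the optimal packing density of the `S²×R` space group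
`8.I.1`, namely `V(R)` divided by the volume `(π/3)·2R` of the prism-shaped
Dirichlet–Voronoi cell, satisfies `0.600 < V(R)/((2π/3)·R) < 0.601`
(the paper's value is `≈ 0.6005`). -/
theorem optimal_density_8I1_bounds :
    let R : ℝ := Real.arccos (Real.sqrt ((5 + Real.sqrt 5) / 10))
    0.600 < V R / ((2 * π / 3) * R) ∧ V R / ((2 * π / 3) * R) < 0.601 := by
  intro R
  obtain ⟨haR, hRb⟩ := Density8I1.R_mem
  have hR0 : (0 : ℝ) < R := by change (0.5535 : ℝ) < R at haR; linarith
  set I : ℝ := ∫ τ in (0 : ℝ)..R, ∫ v in (-(π/2))..(π/2), τ * Real.sin (τ * Real.cos v) with hI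
  have hL : 2 / 3 * R ^ 3 - 2 / 45 * R ^ 5 ≤ I := Density8I1.outer_lb hR0.le
  have hU : I ≤ 2 / 3 * R ^ 3 - 2 / 45 * R ^ 5 + 2 / 1575 * R ^ 7 := Density8I1.outer_ub hR0.le
  have hπ : (0 : ℝ) < π := Real.pi_pos
  have hD : V R / ((2 * π / 3) * R) = 3 * I / R := by
    rw [V, ← hI]
    field_simp
  -- numeric bounds on R², hence on the density
  have haR' : (0.5535 : ℝ) < R := haR
  have hRb' : R < (0.5537 : ℝ) := hRb
  have hs1 : (0.30636 : ℝ) < R ^ 2 := by nlinarith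
  have hs2 : R ^ 2 < (0.30659 : ℝ) := by nlinarith
  have hprod : (0 : ℝ) < (R ^ 2 - 0.30636) * (0.30659 - R ^ 2) :=
    mul_pos (by linarith) (by linarith)
  constructor
  · rw [hD, lt_div_iff₀ hR0]
    have hkey : (0.600 : ℝ) * R < 3 * (2 / 3 * R ^ 3 - 2 / 45 * R ^ 5) := by
      nlinarith [mul_pos hR0 hprod, mul_pos hR0 (mul_pos hR0 hR0)]
    linarith
  · rw [hD, div_lt_iff₀ hR0]
    have hkey : 3 * (2 / 3 * R ^ 3 - 2 / 45 * R ^ 5 + 2 / 1575 * R ^ 7) < (0.601 : ℝ) * R := by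
      nlinarith [mul_pos hR0 hprod, mul_pos hR0 (mul_pos hR0 hR0),
        mul_nonneg (mul_nonneg (mul_nonneg hR0.le hR0.le) hR0.le)
          (mul_nonneg hR0.le (by linarith : (0 : ℝ) ≤ 0.30659 - R ^ 2))]
    linarith
end

section
/- For every R ∈ [0.5803, 0.5805], the density quotient V(R) / ((π/3) · 2R) lies in the interval (0.658, 0.660); in particular the optimal packing density of the S²×R space group 8.I.2, attained at the solution radius R_a ≈ 0.5804 of the touching equations with fibre translation τ = 2R_a, satisfies δ^{opt}(8.I.2) ≈ 0.6587. -/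
open Real Set

private lemma taylor_sin_lb (x : ℝ) (hx : 0 ≤ x) : x - x ^ 3 / 6 ≤ Real.sin x := by
  have hd : ∀ y : ℝ, HasDerivAt (fun t : ℝ => Real.sin t - (t - t ^ 3 / 6))
      (Real.cos y - (1 - y ^ 2 / 2)) y := by
    intro y
    have h1 : HasDerivAt (fun t : ℝ => t - t ^ 3 / 6) (1 - y ^ 2 / 2) y := by
      have h2 := (hasDerivAt_id y).sub ((hasDerivAt_pow 3 y).div_const 6)
      refine h2.congr_deriv ?_
      simp; ring
    exact (Real.hasDerivAt_sin y).sub h1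
  have mono : MonotoneOn (fun t : ℝ => Real.sin t - (t - t ^ 3 / 6)) (Set.Ici 0) := by
    apply monotoneOn_of_deriv_nonneg (convex_Ici 0)
    · exact Continuous.continuousOn (by continuity)
    · intro y _; exact (hd y).differentiableAt.differentiableWithinAt
    · intro y _
      rw [(hd y).deriv]
      have := Real.one_sub_sq_div_two_le_cos (x := y)
      linarith
  have h := mono self_mem_Ici hx hx
  simp only [Real.sin_zero] at h
  norm_num at h
  linarith

private lemma taylor_cos_ub (x : ℝ) (hx : 0 ≤ x) :
    Real.cos x ≤ 1 - x ^ 2 / 2 + x ^ 4 / 24 := by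
  have hd : ∀ y : ℝ, HasDerivAt (fun t : ℝ => (1 - t ^ 2 / 2 + t ^ 4 / 24) - Real.cos t)
      (Real.sin y - (y - y ^ 3 / 6)) y := by
    intro y
    have h1 : HasDerivAt (fun t : ℝ => 1 - t ^ 2 / 2 + t ^ 4 / 24) (-(y - y ^ 3 / 6)) y := by
      have h2 := ((hasDerivAt_const y (1:ℝ)).sub ((hasDerivAt_pow 2 y).div_const 2)).add
        ((hasDerivAt_pow 4 y).div_const 24)
      refine h2.congr_deriv ?_
      simp; ring
    have := h1.sub (Real.hasDerivAt_cos y)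
    refine this.congr_deriv ?_
    ring
  have mono : MonotoneOn (fun t : ℝ => (1 - t ^ 2 / 2 + t ^ 4 / 24) - Real.cos t) (Set.Ici 0) := by
    apply monotoneOn_of_deriv_nonneg (convex_Ici 0)
    · exact Continuous.continuousOn (by continuity)
    · intro y _; exact (hd y).differentiableAt.differentiableWithinAt
    · intro y hy
      rw [interior_Ici] at hy
      rw [(hd y).deriv]
      have := taylor_sin_lb y (le_of_lt hy)
      linarith
  have h := mono self_mem_Ici hx hx
  simp only [Real.cos_zero] at h
  norm_num at h
  linarith

private lemma taylor_sin_ub (x : ℝ) (hx : 0 ≤ x) :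
    Real.sin x ≤ x - x ^ 3 / 6 + x ^ 5 / 120 := by
  have hd : ∀ y : ℝ, HasDerivAt (fun t : ℝ => (t - t ^ 3 / 6 + t ^ 5 / 120) - Real.sin t)
      ((1 - y ^ 2 / 2 + y ^ 4 / 24) - Real.cos y) y := by
    intro y
    have h1 : HasDerivAt (fun t : ℝ => t - t ^ 3 / 6 + t ^ 5 / 120)
        (1 - y ^ 2 / 2 + y ^ 4 / 24) y := by
      have h2 := ((hasDerivAt_id y).sub ((hasDerivAt_pow 3 y).div_const 6)).add
        ((hasDerivAt_pow 5 y).div_const 120)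
      refine h2.congr_deriv ?_
      simp; ring
    exact h1.sub (Real.hasDerivAt_sin y)
  have mono : MonotoneOn (fun t : ℝ => (t - t ^ 3 / 6 + t ^ 5 / 120) - Real.sin t) (Set.Ici 0) := by
    apply monotoneOn_of_deriv_nonneg (convex_Ici 0)
    · exact Continuous.continuousOn (by continuity)
    · intro y _; exact (hd y).differentiableAt.differentiableWithinAt
    · intro y hy
      rw [interior_Ici] at hy
      rw [(hd y).deriv]
      have := taylor_cos_ub y (le_of_lt hy)
      linarith
  have h := mono self_mem_Ici hx hx
  simp only [Real.sin_zero] at h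
  norm_num at h
  linarith

/-- The inner integral, as a function of the fibre coordinate `τ`. -/
noncomputable def Jf (τ : ℝ) : ℝ := ∫ v in (-(π/2))..(π/2), τ * Real.sin (τ * Real.cos v)

private lemma Jf_cont : Continuous Jf := by
  apply intervalIntegral.continuous_parametric_intervalIntegral_of_continuous'
    (f := fun τ v => τ * Real.sin (τ * Real.cos v))
  have : Continuous fun p : ℝ × ℝ => p.1 * Real.sin (p.1 * Real.cos p.2) := by fun_prop
  exact this

private lemma int_cos1 : (∫ v in (-(π/2))..(π/2), Real.cos v) = 2 := by
  rw [integral_cos]; norm_num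

private lemma int_cos3 : (∫ v in (-(π/2))..(π/2), Real.cos v ^ 3) = 4/3 := by
  rw [integral_cos_pow_three]; norm_num

private lemma int_cos5 : (∫ v in (-(π/2))..(π/2), Real.cos v ^ 5) = 16/15 := by
  have h := integral_sin_pow_mul_cos_pow_odd (a := -(π/2)) (b := π/2) 0 2
  norm_num at h
  rw [h]
  have hder : ∀ u ∈ uIcc (-1:ℝ) 1,
      HasDerivAt (fun u : ℝ => u - 2/3*u^3 + 1/5*u^5) ((1-u^2)^2) u := by
    intro u _
    have h2 := ((hasDerivAt_id u).sub ((hasDerivAt_pow 3 u).const_mul (2/3))).add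
      ((hasDerivAt_pow 5 u).const_mul (1/5))
    refine h2.congr_deriv ?_
    push_cast; ring
  rw [intervalIntegral.integral_eq_sub_of_hasDerivAt hder
    ((by continuity : Continuous fun u : ℝ => ((1:ℝ)-u^2)^2).intervalIntegrable _ _)]
  norm_num

private lemma int_poly_lo (τ : ℝ) :
    (∫ v in (-(π/2))..(π/2), (τ^2 * Real.cos v - τ^4/6 * Real.cos v ^ 3))
      = 2*τ^2 - 2*τ^4/9 := by
  rw [intervalIntegral.integral_sub
      ((continuous_const.fun_mul Real.continuous_cos).intervalIntegrable _ _)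
      ((continuous_const.fun_mul (Real.continuous_cos.fun_pow 3)).intervalIntegrable _ _),
    intervalIntegral.integral_const_mul, intervalIntegral.integral_const_mul, int_cos1, int_cos3]
  ring

private lemma int_poly_hi (τ : ℝ) :
    (∫ v in (-(π/2))..(π/2),
      (τ^2 * Real.cos v - τ^4/6 * Real.cos v ^ 3 + τ^6/120 * Real.cos v ^ 5))
      = 2*τ^2 - 2*τ^4/9 + 2*τ^6/225 := by
  rw [intervalIntegral.integral_add
      (((continuous_const.fun_mul Real.continuous_cos).fun_sub
        (continuous_const.fun_mul (Real.continuous_cos.fun_pow 3))).intervalIntegrable _ _)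
      ((continuous_const.fun_mul (Real.continuous_cos.fun_pow 5)).intervalIntegrable _ _),
    int_poly_lo, intervalIntegral.integral_const_mul, int_cos5]
  ring

private lemma Jf_lb (τ : ℝ) (hτ : 0 ≤ τ) : 2*τ^2 - 2*τ^4/9 ≤ Jf τ := by
  rw [← int_poly_lo τ, Jf]
  apply intervalIntegral.integral_mono_on (by linarith [pi_pos] : -(π/2) ≤ π/2)
  · exact ((continuous_const.mul Real.continuous_cos).sub
      (continuous_const.mul (Real.continuous_cos.pow 3))).intervalIntegrable _ _
  · exact (continuous_const.mul
      (Real.continuous_sin.comp (continuous_const.mul Real.continuous_cos))).intervalIntegrable _ _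
  · intro v hv
    have hc : 0 ≤ Real.cos v := Real.cos_nonneg_of_mem_Icc hv
    have hs := taylor_sin_lb (τ * Real.cos v) (mul_nonneg hτ hc)
    nlinarith [mul_le_mul_of_nonneg_left hs hτ]

private lemma Jf_ub (τ : ℝ) (hτ : 0 ≤ τ) : Jf τ ≤ 2*τ^2 - 2*τ^4/9 + 2*τ^6/225 := by
  rw [← int_poly_hi τ, Jf]
  apply intervalIntegral.integral_mono_on (by linarith [pi_pos] : -(π/2) ≤ π/2)
  · exact (continuous_const.mul
      (Real.continuous_sin.comp (continuous_const.mul Real.continuous_cos))).intervalIntegrable _ _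
  · exact (((continuous_const.mul Real.continuous_cos).sub
      (continuous_const.mul (Real.continuous_cos.pow 3))).add
      (continuous_const.mul (Real.continuous_cos.pow 5))).intervalIntegrable _ _
  · intro v hv
    have hc : 0 ≤ Real.cos v := Real.cos_nonneg_of_mem_Icc hv
    have hs := taylor_sin_ub (τ * Real.cos v) (mul_nonneg hτ hc)
    nlinarith [mul_le_mul_of_nonneg_left hs hτ]

/-- For every `R ∈ [0.5803, 0.5805]`, the density quotient `V(R)/((π/3)·2R)` — the ball
volume divided by the volume of the Dirichlet–Voronoi cell of the `8.I.2` packing with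
ball radius `R` and fibre translation `τ = 2R` — lies in `(0.658, 0.660)`; in particular
the optimal packing density of the `S²×R` space group `8.I.2`, attained at the solution
radius `R_a ≈ 0.5804`, is `≈ 0.6587`. -/
theorem density_8I2_bounds :
    ∀ R ∈ Icc (0.5803 : ℝ) 0.5805,
      V R / ((π / 3) * (2 * R)) ∈ Ioo (0.658 : ℝ) 0.660 := by
  intro R hR
  obtain ⟨hR1, hR2⟩ := hR
  have hR0 : (0:ℝ) < R := by norm_num at hR1 ⊢; linarith
  set K : ℝ := ∫ τ in (0:ℝ)..R, Jf τ with hKdef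
  have hVK : V R = 2 * π * K := rfl
  have hKlb : 2*R^3/3 - 2*R^5/45 ≤ K := by
    have h1 : (∫ τ in (0:ℝ)..R, (2*τ^2 - 2/9*τ^4)) ≤ K := by
      apply intervalIntegral.integral_mono_on hR0.le
        (((continuous_const.fun_mul (continuous_pow 2)).fun_sub
          (continuous_const.fun_mul (continuous_pow 4))).intervalIntegrable _ _)
        (Jf_cont.intervalIntegrable _ _)
      intro τ hτ
      have := Jf_lb τ hτ.1
      linarith
    have h2 : (∫ τ in (0:ℝ)..R, (2*τ^2 - 2/9*τ^4)) = 2*R^3/3 - 2*R^5/45 := by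
      rw [intervalIntegral.integral_sub
          ((continuous_const.fun_mul (continuous_pow 2)).intervalIntegrable _ _)
          ((continuous_const.fun_mul (continuous_pow 4)).intervalIntegrable _ _),
        intervalIntegral.integral_const_mul, intervalIntegral.integral_const_mul,
        integral_pow, integral_pow]
      norm_num; ring
    linarith
  have hKub : K ≤ 2*R^3/3 - 2*R^5/45 + 2*R^7/1575 := by
    have h1 : K ≤ ∫ τ in (0:ℝ)..R, (2*τ^2 - 2/9*τ^4 + 2/225*τ^6) := by
      apply intervalIntegral.integral_mono_on hR0.le (Jf_cont.intervalIntegrable _ _)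
        ((((continuous_const.fun_mul (continuous_pow 2)).fun_sub
          (continuous_const.fun_mul (continuous_pow 4))).fun_add
          (continuous_const.fun_mul (continuous_pow 6))).intervalIntegrable _ _)
      intro τ hτ
      have := Jf_ub τ hτ.1
      linarith
    have h2 : (∫ τ in (0:ℝ)..R, (2*τ^2 - 2/9*τ^4 + 2/225*τ^6))
        = 2*R^3/3 - 2*R^5/45 + 2*R^7/1575 := by
      rw [intervalIntegral.integral_add
          (((continuous_const.fun_mul (continuous_pow 2)).fun_sub
            (continuous_const.fun_mul (continuous_pow 4))).intervalIntegrable _ _)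
          ((continuous_const.fun_mul (continuous_pow 6)).intervalIntegrable _ _),
        intervalIntegral.integral_sub
          ((continuous_const.fun_mul (continuous_pow 2)).intervalIntegrable _ _)
          ((continuous_const.fun_mul (continuous_pow 4)).intervalIntegrable _ _),
        intervalIntegral.integral_const_mul, intervalIntegral.integral_const_mul,
        intervalIntegral.integral_const_mul, integral_pow, integral_pow, integral_pow]
      norm_num; ring
    linarith
  have hq : V R / ((π / 3) * (2 * R)) = 3 * K / R := by
    rw [hVK]
    field_simp
  rw [hq]
  constructor
  · rw [lt_div_iff₀ hR0]
    have hs1 : (0.33674 : ℝ) ≤ R^2 := by nlinarith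
    have hs2 : R^2 ≤ (0.33699 : ℝ) := by nlinarith
    have key : (0.658 : ℝ) < 2*R^2 - 2/15*R^4 := by nlinarith [hs1, hs2]
    nlinarith [hKlb, mul_lt_mul_of_pos_left key hR0]
  · rw [div_lt_iff₀ hR0]
    have hs1 : (0.33674 : ℝ) ≤ R^2 := by nlinarith
    have hs2 : R^2 ≤ (0.33699 : ℝ) := by nlinarith
    have key : 2*R^2 - 2/15*R^4 + 2/525*R^6 < (0.660 : ℝ) := by
      nlinarith [hs1, hs2, sq_nonneg (R^2 - 0.33699), mul_le_mul hs2 hs2 (sq_nonneg R) (by norm_num)]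
    nlinarith [hKub, mul_lt_mul_of_pos_left key hR0]
end
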